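/- In Y_R(so_3), the Gauss generators satisfy [k_{-1}(u), k_{-1}(v)] = 0 and [k_{-1}(u), k₀(v)] = 0. -/

import Mathlib

noncomputable section Aux0

/-! ### Generic ring lemmas -/

theorem g_two {S : Type*} [Ring S] (u v x : S) (h : (u - v) * x = 0) : u * x = v * x := by
  rw [sub_mul, sub_eq_zero] at h; exact h

theorem g_expand {S : Type*} [Ring S] (u v o x : S) (h : (u - v - o) * x = 0) :
    u * x = (v + o) * x := by
  rw [sub_sub] at h
  rw [sub_mul, sub_eq_zero] at h; exact h

theorem g_part1 {S : Type*} [Ring S] (p b c : S) (h : p * b * c = b * c) :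
    (p - 1) * (b * c) = 0 := by
  rw [sub_mul, one_mul, sub_eq_zero, ← mul_assoc]; exact h

theorem g_clear {S : Type*} [Ring S] (a y d s1 s2 : S)
    (h : a = y - d * ((0 : S) * s1 - (0 : S) * s2)) : a = y := by simpa using h

theorem g_comm_inv {S : Type*} [Ring S] (u v w : S) (huv : u * v = v * u)
    (h1 : v * w = 1) (h2 : w * v = 1) : u * w = w * u := by
  calc u * w = w * v * (u * w) := by rw [h2, one_mul]
    _ = w * (v * u) * w := by rw [mul_assoc, mul_assoc, mul_assoc]
    _ = w * (u * v) * w := by rw [huv]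
    _ = w * u * (v * w) := by rw [mul_assoc, mul_assoc, mul_assoc]
    _ = w * u := by rw [h1, mul_one]

theorem g_cent_sub {S : Type*} [Ring S] {p q : S} (hp : ∀ y, p * y = y * p)
    (hq : ∀ y, q * y = y * q) : ∀ y, (p - q) * y = y * (p - q) := by
  intro y; rw [sub_mul, mul_sub, hp, hq]

theorem g_cent_mul {S : Type*} [Ring S] {p q : S} (hp : ∀ y, p * y = y * p)
    (hq : ∀ y, q * y = y * q) : ∀ y, (p * q) * y = y * (p * q) := by
  intro y
  calc (p * q) * y = p * (y * q) := by rw [mul_assoc, hq]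
    _ = (p * y) * q := by rw [mul_assoc]
    _ = y * (p * q) := by rw [hp, mul_assoc]

theorem g_main2 {S : Type*} [Ring S] (d b u u1 u2 v q p t w : S)
    (hd : ∀ y : S, d * y = y * d) (hb : ∀ y : S, b * y = y * b)
    (h10 : d * (u * p - p * u) = b * (u2 * v - p * u))
    (h01 : d * (u * q - q * u) = b * (u * q - v * u1))
    (h11 : d * (u * t - t * u) = b * (u2 * q - p * u1))
    (huw : u * w = w * u) (hvw : v * w = 1) (hwv : w * v = 1) :
    d * (u * (t - p * w * q) - (t - p * w * q) * u) = 0 := by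
  have e1 : u * (p * w * q) - (p * w * q) * u
      = (u * p - p * u) * (w * q) + (p * w) * (u * q - q * u) := by
    calc u * (p * w * q) - (p * w * q) * u
        = (u * p - p * u) * (w * q) + (p * (u * w)) * q - (p * w) * (q * u) := by noncomm_ring
      _ = (u * p - p * u) * (w * q) + (p * (w * u)) * q - (p * w) * (q * u) := by rw [huw]
      _ = (u * p - p * u) * (w * q) + (p * w) * (u * q - q * u) := by noncomm_ring
  have e2 : d * (u * (t - p * w * q) - (t - p * w * q) * u)
      = d * (u * t - t * u) - d * ((u * p - p * u) * (w * q) + (p * w) * (u * q - q * u)) := by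
    rw [← e1, ← mul_sub]
    congr 1
    noncomm_ring
  rw [e2, h11]
  have e3 : d * ((u * p - p * u) * (w * q) + (p * w) * (u * q - q * u))
      = (d * (u * p - p * u)) * (w * q) + (p * w) * (d * (u * q - q * u)) := by
    rw [mul_add, ← mul_assoc d (u * p - p * u) (w * q), ← mul_assoc d (p * w) _,
      hd (p * w), mul_assoc (p * w) d _]
  rw [e3, h10, h01]
  have e4 : (b * (u2 * v - p * u)) * (w * q) = b * ((u2 * v - p * u) * (w * q)) :=
    mul_assoc _ _ _
  have e5 : (p * w) * (b * (u * q - v * u1)) = b * ((p * w) * (u * q - v * u1)) := by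
    rw [← mul_assoc, ← hb (p * w), mul_assoc]
  rw [e4, e5, ← mul_add, ← mul_sub]
  have c1 : (u2 * v) * (w * q) = u2 * q := by
    rw [mul_assoc u2 v (w * q), ← mul_assoc v w q, hvw, one_mul]
  have c2 : (p * u) * (w * q) = (p * w) * (u * q) := by
    rw [mul_assoc p u (w * q), ← mul_assoc u w q, huw, mul_assoc w u q, ← mul_assoc p w (u * q)]
  have c3 : (p * w) * (v * u1) = p * u1 := by
    rw [mul_assoc p w (v * u1), ← mul_assoc w v u1, hwv, one_mul]
  have e6 : (u2 * q - p * u1) - ((u2 * v - p * u) * (w * q) + (p * w) * (u * q - v * u1)) = 0 := by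
    rw [sub_mul, mul_sub, c1, c2, c3]
    noncomm_ring
  rw [e6, mul_zero]

/-! ### HahnSeries lemmas -/

/-- `single m r` is central in `HahnSeries ℤ R` when `r` is central in `R`. -/
theorem single_comm_of_comm {R : Type*} [Ring R] {r : R} (hr : ∀ a : R, r * a = a * r) (m : ℤ)
    (x : HahnSeries ℤ R) : HahnSeries.single m r * x = x * HahnSeries.single m r := by
  ext n
  have h1 : (HahnSeries.single m r * x).coeff ((n - m) + m) = r * x.coeff (n - m) :=
    HahnSeries.coeff_single_mul_add
  have h2 : (x * HahnSeries.single m r).coeff ((n - m) + m) = x.coeff (n - m) * r :=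
    HahnSeries.coeff_mul_single_add
  rw [sub_add_cancel] at h1 h2
  rw [h1, h2, hr]

end Aux0


noncomputable section

/-- Two-variable formal series ring: Laurent-type series in `u⁻¹` (outer) over
Laurent-type series in `v⁻¹` (inner) with coefficients in `A`.  In this ring both
variables `u`, `v` and differences such as `u - v`, `u - v - 1/2` make sense. -/
abbrev KK (A : Type) [Ring A] : Type := HahnSeries ℤ (HahnSeries ℤ A)

variable {A : Type} [Ring A]

/-- embed a series `a(u) = ∑_{n≥0} a_n u^{-n}` (u = outer variable) -/
def su (a : ℕ → A) : KK A :=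
  HahnSeries.ofPowerSeries ℤ (HahnSeries ℤ A) (PowerSeries.mk (fun n => HahnSeries.C (a n)))

/-- embed a series `a(v) = ∑_{n≥0} a_n v^{-n}` (v = inner variable) -/
def sv (a : ℕ → A) : KK A :=
  HahnSeries.C (HahnSeries.ofPowerSeries ℤ A (PowerSeries.mk a))

/-- the variable `u` -/
def Uu : KK A := HahnSeries.single (-1 : ℤ) 1
/-- the variable `v` -/
def Vv : KK A := HahnSeries.C (HahnSeries.single (-1 : ℤ) 1)

/-- constants -/
def cA (a : A) : KK A := HahnSeries.C (HahnSeries.C a)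

/-- coefficients of the shifted series `a(u+c)`, using
`(u+c)^{-r} = ∑_{j≥0} (-1)^j C(r-1+j,j) c^j u^{-r-j}`. -/
def shPow [Algebra ℚ A] (c : ℚ) (a : ℕ → A) : ℕ → A :=
  fun m => ∑ r ∈ Finset.range (m + 1),
    (algebraMap ℚ A ((-c) ^ (m - r) * ((m - 1).choose (m - r) : ℚ))) * a r

/-- the central scalar 1/2 = κ -/
def half [Algebra ℚ A] : KK A := cA (algebraMap ℚ A (1/2))

/-- Kronecker delta in `KK A` -/
def kd {ι : Type} [DecidableEq ι] (i j : ι) : KK A := if i = j then 1 else 0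

variable (A) in
/-- The RTT Yangian `Y_R(so₃)`: the indices `-1, 0, 1` are encoded as `0, 1, 2 : Fin 3`,
so that the index `-i` corresponds to `Fin.rev`.  The data consists of the matrix
generator coefficients `t i j r` (with `t_{ij}(u) = ∑_r t_{ij}^{(r)} u^{-r}`,
`t_{ij}^{(0)} = δ_{ij}`) subject to the entrywise RTT relation (with denominators
`u-v`, `u-v-1/2` cleared) and the unitarity relation `T(u)Tᵗ(u+1/2) = Tᵗ(u+1/2)T(u) = 1`,
together with the Gauss generators `e`, `f`, `k` (and the inverses of the `k`'s)
defined by the unique Gauss decomposition `T(u) = F(u)K(u)E(u)`. -/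
structure YRso3 (A : Type) [Ring A] [Algebra ℚ A] where
  t : Fin 3 → Fin 3 → ℕ → A
  t_zero : ∀ i j, t i j 0 = if i = j then 1 else 0
  /-- `(u-v)(u-v-1/2)[t_{ij}(u),t_{kl}(v)] = (u-v-1/2)(t_{kj}(u)t_{il}(v)-t_{kj}(v)t_{il}(u))
      - (u-v)(δ_{k,-i} ∑_p t_{pj}(u)t_{-p,l}(v) - δ_{l,-j} ∑_p t_{k,-p}(v)t_{ip}(u))` -/
  rtt : ∀ i j k l : Fin 3,
    (Uu - Vv) * (Uu - Vv - half) * (su (t i j) * sv (t k l) - sv (t k l) * su (t i j)) =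
      (Uu - Vv - half) * (su (t k j) * sv (t i l) - sv (t k j) * su (t i l)) -
      (Uu - Vv) * (kd k i.rev * ∑ p : Fin 3, su (t p j) * sv (t p.rev l) -
                   kd l j.rev * ∑ p : Fin 3, sv (t k p.rev) * su (t i p))
  /-- `T(u)Tᵗ(u+1/2) = 1` -/
  unitary₁ : ∀ i j : Fin 3,
    ∑ p : Fin 3, su (t i p) * su (shPow (1/2) (t j.rev p.rev)) = kd i j
  /-- `Tᵗ(u+1/2)T(u) = 1` -/
  unitary₂ : ∀ i j : Fin 3,
    ∑ p : Fin 3, su (shPow (1/2) (t p.rev i.rev)) * su (t p j) = kd i j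
  -- Gauss generators: e₋₁,₀ e₀₁ e₋₁,₁ f₀,₋₁ f₁₀ f₁,₋₁ k₋₁ k₀ k₁ and the inverses k⁻¹
  e10 : ℕ → A
  e01 : ℕ → A
  e11 : ℕ → A
  f01 : ℕ → A
  f10 : ℕ → A
  f11 : ℕ → A
  km1 : ℕ → A
  k0 : ℕ → A
  k1 : ℕ → A
  km1' : ℕ → A
  k0' : ℕ → A
  k1' : ℕ → A
  e10_zero : e10 0 = 0
  e01_zero : e01 0 = 0
  e11_zero : e11 0 = 0
  f01_zero : f01 0 = 0
  f10_zero : f10 0 = 0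
  f11_zero : f11 0 = 0
  km1_zero : km1 0 = 1
  k0_zero : k0 0 = 1
  k1_zero : k1 0 = 1
  -- the Gauss decomposition T(u) = F(u)K(u)E(u), entrywise
  g11 : su (t 0 0) = su km1
  g12 : su (t 0 1) = su km1 * su e10
  g13 : su (t 0 2) = su km1 * su e11
  g21 : su (t 1 0) = su f01 * su km1
  g22 : su (t 1 1) = su k0 + su f01 * su km1 * su e10
  g23 : su (t 1 2) = su k0 * su e01 + su f01 * su km1 * su e11
  g31 : su (t 2 0) = su f11 * su km1
  g32 : su (t 2 1) = su f10 * su k0 + su f11 * su km1 * su e10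
  g33 : su (t 2 2) = su k1 + su f10 * su k0 * su e01 + su f11 * su km1 * su e11
  -- the inverses of the diagonal Gauss generators
  km1_inv₁ : su km1 * su km1' = 1
  km1_inv₂ : su km1' * su km1 = 1
  k0_inv₁ : su k0 * su k0' = 1
  k0_inv₂ : su k0' * su k0 = 1
  k1_inv₁ : su k1 * su k1' = 1
  k1_inv₂ : su k1' * su k1 = 1


section Infra
variable {A : Type} [Ring A]

/-- cancellation kernel -/
theorem cancelUuC (w : HahnSeries ℤ A) (X : KK A)
    (h : Uu * X = HahnSeries.C w * X) : X = 0 := by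
  have hc : ∀ n : ℤ, X.coeff (n + 1) = w * X.coeff n := by
    intro n
    have h1 : (Uu * X : KK A).coeff n = 1 * X.coeff (n + 1) := by
      have h1' : ((HahnSeries.single (-1 : ℤ) (1 : HahnSeries ℤ A)) * X).coeff ((n + 1) + (-1))
          = 1 * X.coeff (n + 1) := HahnSeries.coeff_single_mul_add
      rw [show (n + 1) + (-1 : ℤ) = n by ring] at h1'
      exact h1'
    have h2 : (HahnSeries.C w * X : KK A).coeff n = w * X.coeff n :=
      HahnSeries.coeff_single_zero_mul
    rw [one_mul] at h1
    rw [← h1, h, h2]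
  by_contra hX
  have h1 := HahnSeries.coeff_order_eq_zero.not.2 hX
  have h2 : X.coeff X.order = w * X.coeff (X.order - 1) := by
    have := hc (X.order - 1); rwa [sub_add_cancel] at this
  have h3 : X.coeff (X.order - 1) = 0 :=
    HahnSeries.coeff_eq_zero_of_lt_order (by omega)
  rw [h3, mul_zero] at h2
  exact h1 h2

theorem cancel_UV (X : KK A) (h : (Uu - Vv) * X = 0) : X = 0 := by
  apply cancelUuC (HahnSeries.single (-1 : ℤ) (1 : A)) X
  exact g_two Uu Vv X h

theorem cancel_UV1 (X : KK A) (h : (Uu - Vv - 1) * X = 0) : X = 0 := by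
  apply cancelUuC (HahnSeries.single (-1 : ℤ) (1 : A) + 1) X
  have h' : Uu * X = (Vv + 1) * X := g_expand Uu Vv 1 X h
  have e : (Vv + (1 : KK A)) = HahnSeries.C (HahnSeries.single (-1 : ℤ) (1 : A) + 1) := by
    rw [map_add (HahnSeries.C : HahnSeries ℤ A →+* KK A),
      map_one (HahnSeries.C : HahnSeries ℤ A →+* KK A)]
    rfl
  rw [← e]
  exact h'

theorem cancel_UVhalf [Algebra ℚ A] (X : KK A) (h : (Uu - Vv - half) * X = 0) : X = 0 := by
  apply cancelUuC
    (HahnSeries.single (-1 : ℤ) (1 : A) + HahnSeries.C (algebraMap ℚ A (1/2))) X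
  have h' : Uu * X = (Vv + half) * X := g_expand Uu Vv half X h
  have e : (Vv + (half : KK A))
      = HahnSeries.C (HahnSeries.single (-1 : ℤ) (1 : A) + HahnSeries.C (algebraMap ℚ A (1/2))) := by
    rw [map_add (HahnSeries.C : HahnSeries ℤ A →+* KK A)]
    rfl
  rw [← e]
  exact h'

/-- centrality -/
theorem cent_Uu (x : KK A) : Uu * x = x * Uu :=
  single_comm_of_comm (fun a => by rw [one_mul, mul_one]) (-1) x

theorem cent_Vv (x : KK A) : Vv * x = x * Vv :=
  single_comm_of_comm
    (fun y => single_comm_of_comm (fun a => by rw [one_mul, mul_one]) (-1) y) 0 x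

theorem cent_half [Algebra ℚ A] (x : KK A) : half * x = x * half :=
  single_comm_of_comm
    (fun y => single_comm_of_comm (fun a => Algebra.commutes _ a) 0 y) 0 x

theorem cent_one' (x : KK A) : (1 : KK A) * x = x * (1 : KK A) :=
  (one_mul x).trans (mul_one x).symm

/-- transfer ring homs -/
def toU (A : Type) [Ring A] : PowerSeries A →+* KK A :=
  (HahnSeries.ofPowerSeries ℤ (HahnSeries ℤ A)).comp
    (PowerSeries.map (HahnSeries.C : A →+* HahnSeries ℤ A))

def toV (A : Type) [Ring A] : PowerSeries A →+* KK A :=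
  (HahnSeries.C : HahnSeries ℤ A →+* KK A).comp (HahnSeries.ofPowerSeries ℤ A)

theorem map_C_mk (a : ℕ → A) :
    PowerSeries.map (HahnSeries.C : A →+* HahnSeries ℤ A) (PowerSeries.mk a)
      = PowerSeries.mk (fun n => HahnSeries.C (a n)) := by
  ext n
  simp [PowerSeries.coeff_map]

theorem su_eq (a : ℕ → A) : su a = toU A (PowerSeries.mk a) := by
  unfold su toU
  simp only [RingHom.coe_comp, Function.comp_apply]
  rw [map_C_mk]

theorem sv_eq (a : ℕ → A) : sv a = toV A (PowerSeries.mk a) := rfl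

theorem toU_inj : Function.Injective (toU A) := by
  have h1 : Function.Injective (HahnSeries.ofPowerSeries ℤ (HahnSeries ℤ A)) :=
    HahnSeries.ofPowerSeries_injective
  intro f g h
  have h2 : PowerSeries.map (HahnSeries.C : A →+* HahnSeries ℤ A) f
      = PowerSeries.map (HahnSeries.C : A →+* HahnSeries ℤ A) g := h1 h
  ext n
  have h3 := congrArg (PowerSeries.coeff n) h2
  simp only [PowerSeries.coeff_map] at h3
  exact HahnSeries.C_injective h3

theorem toU_mul (f g : PowerSeries A) : toU A (f * g) = toU A f * toU A g := map_mul _ _ _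
theorem toU_add (f g : PowerSeries A) : toU A (f + g) = toU A f + toU A g := map_add _ _ _
theorem toU_one : toU A 1 = 1 := map_one _
theorem toV_mul (f g : PowerSeries A) : toV A (f * g) = toV A f * toV A g := map_mul _ _ _
theorem toV_sub (f g : PowerSeries A) : toV A (f - g) = toV A f - toV A g := map_sub _ _ _
theorem toV_one : toV A 1 = 1 := map_one _

end Infra

/-- `[k₋₁(u), k₋₁(v)] = 0` and `[k₋₁(u), k₀(v)] = 0`. -/
theorem stmt6 (A : Type) [Ring A] [Algebra ℚ A] (Y : YRso3 A) :
    su Y.km1 * sv Y.km1 = sv Y.km1 * su Y.km1 ∧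
    su Y.km1 * sv Y.k0 = sv Y.k0 * su Y.km1 := by
  classical
  -- Kronecker delta values
  have kd0 : (kd (0 : Fin 3) ((0 : Fin 3).rev) : KK A) = 0 := if_neg (by decide)
  have kd1 : (kd (1 : Fin 3) ((0 : Fin 3).rev) : KK A) = 0 := if_neg (by decide)
  -- part 1 : [t00(u), t00(v)] = 0
  have hr00 := Y.rtt 0 0 0 0
  rw [kd0] at hr00
  have h00 : (Uu - Vv) * (Uu - Vv - half) *
        (su (Y.t 0 0) * sv (Y.t 0 0) - sv (Y.t 0 0) * su (Y.t 0 0))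
      = (Uu - Vv - half) * (su (Y.t 0 0) * sv (Y.t 0 0) - sv (Y.t 0 0) * su (Y.t 0 0)) :=
    g_clear (S := KK A) _ _ _ _ _ hr00
  have hpart1 : ((Uu - Vv) - 1) * ((Uu - Vv - half) *
        (su (Y.t 0 0) * sv (Y.t 0 0) - sv (Y.t 0 0) * su (Y.t 0 0))) = 0 :=
    g_part1 (S := KK A) _ _ _ h00
  have hB : (Uu - Vv - half) *
        (su (Y.t 0 0) * sv (Y.t 0 0) - sv (Y.t 0 0) * su (Y.t 0 0)) = 0 :=
    cancel_UV1 _ hpart1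
  have hUV : su (Y.t 0 0) * sv (Y.t 0 0) - sv (Y.t 0 0) * su (Y.t 0 0) = 0 :=
    cancel_UVhalf _ hB
  have hUVc : su (Y.t 0 0) * sv (Y.t 0 0) = sv (Y.t 0 0) * su (Y.t 0 0) :=
    sub_eq_zero.mp hUV
  -- PowerSeries level identities
  have pg11 : PowerSeries.mk (Y.t 0 0) = PowerSeries.mk Y.km1 :=
    toU_inj (by rw [← su_eq, ← su_eq]; exact Y.g11)
  have pk1 : PowerSeries.mk Y.km1 * PowerSeries.mk Y.km1' = 1 :=
    toU_inj (by rw [toU_mul, toU_one, ← su_eq, ← su_eq]; exact Y.km1_inv₁)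
  have pk2 : PowerSeries.mk Y.km1' * PowerSeries.mk Y.km1 = 1 :=
    toU_inj (by rw [toU_mul, toU_one, ← su_eq, ← su_eq]; exact Y.km1_inv₂)
  have pg12 : PowerSeries.mk (Y.t 0 1) = PowerSeries.mk Y.km1 * PowerSeries.mk Y.e10 :=
    toU_inj (by rw [toU_mul, ← su_eq, ← su_eq, ← su_eq]; exact Y.g12)
  have pg21 : PowerSeries.mk (Y.t 1 0) = PowerSeries.mk Y.f01 * PowerSeries.mk Y.km1 :=
    toU_inj (by rw [toU_mul, ← su_eq, ← su_eq, ← su_eq]; exact Y.g21)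
  have pg22 : PowerSeries.mk (Y.t 1 1) = PowerSeries.mk Y.k0 +
      PowerSeries.mk Y.f01 * PowerSeries.mk Y.km1 * PowerSeries.mk Y.e10 :=
    toU_inj (by rw [toU_add, toU_mul, toU_mul, ← su_eq, ← su_eq, ← su_eq, ← su_eq]; exact Y.g22)
  have pt1 : PowerSeries.mk (Y.t 0 0) * PowerSeries.mk Y.km1' = 1 := by
    rw [pg11]; exact pk1
  have pt2 : PowerSeries.mk Y.km1' * PowerSeries.mk (Y.t 0 0) = 1 := by
    rw [pg11]; exact pk2
  have p3 : PowerSeries.mk Y.k0 = PowerSeries.mk (Y.t 1 1) -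
      PowerSeries.mk (Y.t 1 0) * PowerSeries.mk Y.km1' * PowerSeries.mk (Y.t 0 1) := by
    rw [pg22, pg21, pg12]
    have e : PowerSeries.mk Y.f01 * PowerSeries.mk Y.km1 * PowerSeries.mk Y.km1' *
          (PowerSeries.mk Y.km1 * PowerSeries.mk Y.e10)
        = PowerSeries.mk Y.f01 * PowerSeries.mk Y.km1 * PowerSeries.mk Y.e10 := by
      rw [mul_assoc (PowerSeries.mk Y.f01 * PowerSeries.mk Y.km1) (PowerSeries.mk Y.km1') _,
        ← mul_assoc (PowerSeries.mk Y.km1') _ _, pk2, one_mul]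
    rw [e, add_sub_cancel_right]
  -- sv level identities
  have hsv11 : sv Y.km1 = sv (Y.t 0 0) := by
    rw [sv_eq, sv_eq]; exact congrArg (toV A) pg11.symm
  have hsvVW : sv (Y.t 0 0) * sv Y.km1' = 1 := by
    have h := congrArg (toV A) pt1
    rw [toV_mul, toV_one, ← sv_eq, ← sv_eq] at h
    exact h
  have hsvWV : sv Y.km1' * sv (Y.t 0 0) = 1 := by
    have h := congrArg (toV A) pt2
    rw [toV_mul, toV_one, ← sv_eq, ← sv_eq] at h
    exact h
  have hsvk0 : sv Y.k0 = sv (Y.t 1 1) - sv (Y.t 1 0) * sv Y.km1' * sv (Y.t 0 1) := by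
    have h := congrArg (toV A) p3
    rw [toV_sub, toV_mul, toV_mul, ← sv_eq, ← sv_eq, ← sv_eq, ← sv_eq] at h
    exact h
  constructor
  · rw [← Y.g11, hsv11]; exact hUVc
  -- part 2
  have hr10 := Y.rtt 0 0 1 0
  rw [kd1, kd0] at hr10
  have h10 : (Uu - Vv) * (Uu - Vv - half) *
        (su (Y.t 0 0) * sv (Y.t 1 0) - sv (Y.t 1 0) * su (Y.t 0 0))
      = (Uu - Vv - half) * (su (Y.t 1 0) * sv (Y.t 0 0) - sv (Y.t 1 0) * su (Y.t 0 0)) :=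
    g_clear (S := KK A) _ _ _ _ _ hr10
  have hr01 := Y.rtt 0 0 0 1
  rw [kd0, kd1] at hr01
  have h01 : (Uu - Vv) * (Uu - Vv - half) *
        (su (Y.t 0 0) * sv (Y.t 0 1) - sv (Y.t 0 1) * su (Y.t 0 0))
      = (Uu - Vv - half) * (su (Y.t 0 0) * sv (Y.t 0 1) - sv (Y.t 0 0) * su (Y.t 0 1)) :=
    g_clear (S := KK A) _ _ _ _ _ hr01
  have hr11 := Y.rtt 0 0 1 1
  rw [kd1] at hr11
  have h11 : (Uu - Vv) * (Uu - Vv - half) *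
        (su (Y.t 0 0) * sv (Y.t 1 1) - sv (Y.t 1 1) * su (Y.t 0 0))
      = (Uu - Vv - half) * (su (Y.t 1 0) * sv (Y.t 0 1) - sv (Y.t 1 0) * su (Y.t 0 1)) :=
    g_clear (S := KK A) _ _ _ _ _ hr11
  -- centrality
  have cUV : ∀ y : KK A, (Uu - Vv) * y = y * (Uu - Vv) := g_cent_sub (S := KK A) cent_Uu cent_Vv
  have cB : ∀ y : KK A, (Uu - Vv - half) * y = y * (Uu - Vv - half) := g_cent_sub (S := KK A) cUV cent_half
  have cDD : ∀ y : KK A, ((Uu - Vv) * (Uu - Vv - half)) * y = y * ((Uu - Vv) * (Uu - Vv - half)) :=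
    g_cent_mul (S := KK A) cUV cB
  have hUW : su (Y.t 0 0) * sv Y.km1' = sv Y.km1' * su (Y.t 0 0) :=
    g_comm_inv (S := KK A) _ _ _ hUVc hsvVW hsvWV
  have hmain : (Uu - Vv) * (Uu - Vv - half) *
      (su (Y.t 0 0) * (sv (Y.t 1 1) - sv (Y.t 1 0) * sv Y.km1' * sv (Y.t 0 1)) -
       (sv (Y.t 1 1) - sv (Y.t 1 0) * sv Y.km1' * sv (Y.t 0 1)) * su (Y.t 0 0)) = 0 :=
    g_main2 (S := KK A) _ _ _ _ _ _ _ _ _ _ cDD cB h10 h01 h11 hUW hsvVW hsvWV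
  have hmain' : (Uu - Vv) * ((Uu - Vv - half) *
      (su (Y.t 0 0) * (sv (Y.t 1 1) - sv (Y.t 1 0) * sv Y.km1' * sv (Y.t 0 1)) -
       (sv (Y.t 1 1) - sv (Y.t 1 0) * sv Y.km1' * sv (Y.t 0 1)) * su (Y.t 0 0))) = 0 :=
    (mul_assoc (G := KK A) _ _ _).symm.trans hmain
  have hX : su (Y.t 0 0) * (sv (Y.t 1 1) - sv (Y.t 1 0) * sv Y.km1' * sv (Y.t 0 1)) -
      (sv (Y.t 1 1) - sv (Y.t 1 0) * sv Y.km1' * sv (Y.t 0 1)) * su (Y.t 0 0) = 0 :=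
    cancel_UVhalf _ (cancel_UV _ hmain')
  rw [← Y.g11, hsvk0]
  exact sub_eq_zero.mp hX
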